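/- Define ι on rationals in (0,1) by: if β = (p+r)/(q+s) where p/q and r/s are the left and right Farey neighbors of β (so ps − qr = −1, q, s ≥ 0), then ι(β) = q/(q+s). Then ι is an involution on ℚ ∩ (0,1): ι(ι(β)) = β for all rational β ∈ (0,1). -/

import Mathlib

/-- The map `ι` sending `β = (p+r)/(q+s)` (with Farey neighbors `p/q < β < r/s`,
`ps - qr = -1`) to `q/(q+s)` is an involution on `ℚ ∩ (0,1)`: if `p'/q' < ι β < r'/s'`
are the Farey neighbors of `ι β`, then `ι (ι β) = q'/(q'+s') = β`. -/
theorem stmt_9 (β : ℚ) (hβ0 : 0 < β) (hβ1 : β < 1)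
    (p q r s : ℤ) (h : p * s - q * r = -1) (hq : 0 < q) (hs : 0 < s)
    (hmid : β = ((p : ℚ) + r) / ((q : ℚ) + s))
    (hl : (p : ℚ) / q < β) (hr : β < (r : ℚ) / s)
    (p' q' r' s' : ℤ) (h' : p' * s' - q' * r' = -1) (hq' : 0 < q') (hs' : 0 < s')
    (hmid' : (q : ℚ) / ((q : ℚ) + s) = ((p' : ℚ) + r') / ((q' : ℚ) + s'))
    (hl' : (p' : ℚ) / q' < (q : ℚ) / ((q : ℚ) + s))
    (hr' : (q : ℚ) / ((q : ℚ) + s) < (r' : ℚ) / s') :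
    (q' : ℚ) / ((q' : ℚ) + s') = β := by
  have hqs : (0:ℤ) < q + s := by linarith
  have hqs' : (0:ℤ) < q' + s' := by linarith
  have hqsQ : ((q:ℚ) + s) ≠ 0 := by positivity
  have hqs'Q : ((q':ℚ) + s') ≠ 0 := by positivity
  -- coprimality facts
  have cop1 : IsCoprime q (q + s) := by
    exact ⟨r + p, -p, by linear_combination -h⟩
  have cop2 : IsCoprime (p' + r') (q' + s') := by
    exact ⟨q', -p', by linear_combination -h'⟩
  -- cross-multiplied version of hmid'
  have hcross : q * (q' + s') = (p' + r') * (q + s) := by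
    have := hmid'
    field_simp at this
    rw [mul_comm (p' + r')]
    exact_mod_cast this
  -- q + s = q' + s'
  have hden : q + s = q' + s' := by
    have d1 : (q + s) ∣ (q' + s') := by
      have : (q + s) ∣ q * (q' + s') := ⟨p' + r', by linarith [hcross]⟩
      exact (IsCoprime.dvd_of_dvd_mul_left cop1.symm this)
    have d2 : (q' + s') ∣ (q + s) := by
      have : (q' + s') ∣ (p' + r') * (q + s) := ⟨q, by linarith [hcross]⟩
      exact (IsCoprime.dvd_of_dvd_mul_left cop2.symm this)
    exact Int.dvd_antisymm hqs.le hqs'.le d1 d2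
  have hnum : q = p' + r' := by
    have := hcross
    rw [← hden] at this
    exact mul_right_cancel₀ (ne_of_gt hqs) this
  -- key: p'*(q+s) - q'*q = -1
  have key : p' * (q + s) - q' * q = -1 := by
    have hs'e : s' = q + s - q' := by omega
    have hr'e : r' = q - p' := by omega
    rw [hs'e, hr'e] at h'
    nlinarith [h']
  -- also (p+r)*q - p*(q+s) = 1
  have key2 : (p + r) * q - p * (q + s) = 1 := by nlinarith [h]
  -- hence (q+s) ∣ (q' - (p+r))
  have hdvd : (q + s) ∣ (q' - (p + r)) := by
    have : (q + s) ∣ (q' - (p + r)) * q := ⟨p' - p, by nlinarith [key, key2]⟩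
    exact (IsCoprime.dvd_of_dvd_mul_right cop1.symm this)
  -- bounds: 0 < p + r < q + s
  have hpr0 : (0:ℤ) < p + r := by
    have : (0:ℚ) < ((p:ℚ) + r) := by
      rw [hmid] at hβ0
      have : (0:ℚ) < (q:ℚ) + s := by positivity
      exact (div_pos_iff.mp hβ0).resolve_right (fun ⟨_, h2⟩ => absurd this (not_lt.mpr h2.le)) |>.1
    exact_mod_cast this
  have hpr1 : p + r < q + s := by
    have hlt : ((p:ℚ) + r) / ((q:ℚ) + s) < 1 := hmid ▸ hβ1
    have : ((p:ℚ) + r) < (q:ℚ) + s := by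
      have hpos : (0:ℚ) < (q:ℚ) + s := by positivity
      calc ((p:ℚ) + r) = ((p:ℚ) + r) / ((q:ℚ) + s) * ((q:ℚ) + s) := by field_simp
        _ < 1 * ((q:ℚ) + s) := by exact mul_lt_mul_of_pos_right hlt hpos
        _ = (q:ℚ) + s := by ring
    exact_mod_cast this
  have hq'eq : q' = p + r := by
    rcases hdvd with ⟨k, hk⟩
    have hq'lt : q' < q + s := by omega
    have hk0 : k = 0 := by
      by_contra hne
      have hcase : 1 ≤ k ∨ k ≤ -1 := by omega
      rcases hcase with hpos | hneg
      · nlinarith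
      · nlinarith
    rw [hk0, mul_zero] at hk
    omega
  have hdQ : ((q':ℚ) + s') = (q:ℚ) + s := by exact_mod_cast congrArg (Int.cast : ℤ → ℚ) hden.symm
  have hnQ : (q':ℚ) = (p:ℚ) + r := by exact_mod_cast congrArg (Int.cast : ℤ → ℚ) hq'eq
  rw [hmid, hdQ, hnQ]
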